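/- For three i.i.d. uniform random variables a_1, a_2, a_3 on [0,1] and nonincreasing decision numbers 1 ≥ k_1 ≥ k_2 ≥ 0, the probability of the event {a_1 < k_1, a_1 not the maximum, a_2 < k_2, a_2 not the maximum} equals k_1·k_2 - k_1^2·k_2/2 - k_2^3/6. -/

import Mathlib

open MeasureTheory

/-- For three i.i.d. uniform draws on `[0,1]` and nonincreasing decision numbers
`1 ≥ k₁ ≥ k₂ ≥ 0`, the probability that the game continues past round 2, i.e.
`a₁ < k₁`, `a₁ < max(a₂,a₃)`, `a₂ < k₂` and `a₂ < a₃`, equals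
`k₁k₂ - k₁²k₂/2 - k₂³/6`. -/
theorem n_three_continuation_past_round_two (k₁ k₂ : ℝ) (h0 : 0 ≤ k₂) (h21 : k₂ ≤ k₁)
    (h1 : k₁ ≤ 1) :
    (Measure.pi fun _ : Fin 3 => (volume : Measure ℝ).restrict (Set.Icc 0 1))
      {a | a 0 < k₁ ∧ a 0 < max (a 1) (a 2) ∧ a 1 < k₂ ∧ a 1 < a 2}
      = ENNReal.ofReal (k₁ * k₂ - k₁ ^ 2 * k₂ / 2 - k₂ ^ 3 / 6) := by
  set μ : Measure ℝ := (volume : Measure ℝ).restrict (Set.Icc 0 1) with hμ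
  set T : Set (ℝ × (Fin 2 → ℝ)) :=
    {p | p.2 0 < min k₁ p.1 ∧ p.2 1 < min k₂ p.1} with hT
  have hset : {a : Fin 3 → ℝ | a 0 < k₁ ∧ a 0 < max (a 1) (a 2) ∧ a 1 < k₂ ∧ a 1 < a 2}
      = (MeasurableEquiv.piFinSuccAbove (fun _ => ℝ) 2) ⁻¹' T := by
    ext a
    show _ ↔ (a 0 < min k₁ (a 2) ∧ a 1 < min k₂ (a 2))
    simp only [Set.mem_setOf_eq, lt_min_iff]
    constructor
    · rintro ⟨h1, h2, h3, h4⟩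
      rw [max_eq_right h4.le] at h2
      exact ⟨⟨h1, h2⟩, h3, h4⟩
    · rintro ⟨⟨h1, h2⟩, h3, h4⟩
      exact ⟨h1, lt_of_lt_of_le h2 (le_max_right _ _), h3, h4⟩
  have hmin : ∀ c : ℝ, Measurable fun p : ℝ × (Fin 2 → ℝ) => min c p.1 :=
    fun c => measurable_const.min measurable_fst
  have hco : ∀ j : Fin 2, Measurable fun p : ℝ × (Fin 2 → ℝ) => p.2 j :=
    fun j => (measurable_pi_apply j).comp measurable_snd
  have hTm : MeasurableSet T :=
    (measurableSet_lt (hco 0) (hmin k₁)).inter (measurableSet_lt (hco 1) (hmin k₂))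
  rw [hset,
    (measurePreserving_piFinSuccAbove (fun _ : Fin 3 => μ) 2).measure_preimage hTm.nullMeasurableSet,
    Measure.prod_apply hTm]
  have hμIio : ∀ t : ℝ, 0 ≤ t → t ≤ 1 → μ (Set.Iio t) = ENNReal.ofReal t := by
    intro t ht0 ht1
    rw [hμ, Measure.restrict_apply measurableSet_Iio]
    have : Set.Iio t ∩ Set.Icc 0 1 = Set.Ico 0 t := by
      ext x
      simp only [Set.mem_inter_iff, Set.mem_Iio, Set.mem_Icc, Set.mem_Ico]
      constructor
      · rintro ⟨h, h0', _⟩; exact ⟨h0', h⟩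
      · rintro ⟨h0', h⟩; exact ⟨h, h0', by linarith⟩
    rw [this, Real.volume_Ico, sub_zero]
  have hslice : ∀ x : ℝ, x ∈ Set.Icc (0:ℝ) 1 →
      (Measure.pi fun _ : Fin 2 => μ) (Prod.mk x ⁻¹' T)
        = ENNReal.ofReal (min k₁ x * min k₂ x) := by
    intro x hx
    have : Prod.mk x ⁻¹' T = Set.univ.pi ![Set.Iio (min k₁ x), Set.Iio (min k₂ x)] := by
      ext b
      simp [hT, Fin.forall_fin_two]
    rw [this, Measure.pi_pi, Fin.prod_univ_two]
    simp only [Matrix.cons_val_zero, Matrix.cons_val_one, Matrix.head_cons]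
    rw [hμIio _ (le_min (le_trans h0 h21) hx.1) (min_le_of_left_le h1),
      hμIio _ (le_min h0 hx.1) (min_le_of_left_le (le_trans h21 h1)),
      ← ENNReal.ofReal_mul (le_min (le_trans h0 h21) hx.1)]
  have hcont : Continuous fun x : ℝ => min k₁ x * min k₂ x :=
    (continuous_const.min continuous_id).mul (continuous_const.min continuous_id)
  have key : ∫⁻ x, (Measure.pi fun _ : Fin 2 => μ) (Prod.mk x ⁻¹' T) ∂μ
      = ENNReal.ofReal (∫ x in Set.Icc (0:ℝ) 1, min k₁ x * min k₂ x) := by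
    rw [hμ]
    rw [setLIntegral_congr_fun measurableSet_Icc
      (fun x hx => hslice x hx)]
    rw [ofReal_integral_eq_lintegral_ofReal (hcont.integrableOn_Icc)
      (Filter.Eventually.of_forall fun x => ?_)]
    show (0:ℝ) ≤ min k₁ x * min k₂ x
    rcases le_total x k₂ with h | h
    · rw [min_eq_right h, min_eq_right (h.trans h21)]
      exact mul_self_nonneg x
    · exact mul_nonneg (le_min (h0.trans h21) (h0.trans h)) (le_min h0 (h0.trans h))
  rw [key]
  congr 1
  have hii : ∀ a b : ℝ, IntervalIntegrable (fun x => min k₁ x * min k₂ x) volume a b :=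
    fun a b => hcont.intervalIntegrable a b
  rw [MeasureTheory.integral_Icc_eq_integral_Ioc,
    ← intervalIntegral.integral_of_le (by norm_num : (0:ℝ) ≤ 1)]
  rw [← intervalIntegral.integral_add_adjacent_intervals (hii 0 k₁) (hii k₁ 1),
    ← intervalIntegral.integral_add_adjacent_intervals (hii 0 k₂) (hii k₂ k₁)]
  have e1 : ∫ x in (0:ℝ)..k₂, min k₁ x * min k₂ x = ∫ x in (0:ℝ)..k₂, x ^ 2 := by
    apply intervalIntegral.integral_congr
    intro x hx
    show min k₁ x * min k₂ x = x ^ 2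
    rw [Set.uIcc_of_le h0] at hx
    rw [min_eq_right (hx.2.trans h21), min_eq_right hx.2]
    ring
  have e2 : ∫ x in k₂..k₁, min k₁ x * min k₂ x = ∫ x in k₂..k₁, k₂ * x := by
    apply intervalIntegral.integral_congr
    intro x hx
    show min k₁ x * min k₂ x = k₂ * x
    rw [Set.uIcc_of_le h21] at hx
    rw [min_eq_right hx.2, min_eq_left hx.1]
    ring
  have e3 : ∫ x in k₁..1, min k₁ x * min k₂ x = ∫ x in k₁..(1:ℝ), k₁ * k₂ := by
    apply intervalIntegral.integral_congr
    intro x hx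
    show min k₁ x * min k₂ x = k₁ * k₂
    rw [Set.uIcc_of_le h1] at hx
    rw [min_eq_left hx.1, min_eq_left (h21.trans hx.1)]
  rw [e1, e2, e3, integral_pow, intervalIntegral.integral_const_mul, integral_id,
    intervalIntegral.integral_const]
  simp only [smul_eq_mul]
  ring
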